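/- Let r, m be positive integers and k a natural number. Then M_r(k,m) ≥ (k!·(r!)^m·m^{k+mr}/(k+mr)!) · (1 − ((m−1)^k/m^{k+mr}) · Σ_{i=1}^{mr} C(k+mr, k+i)·(m−1)^i), where C(·,·) denotes the binomial coefficient. -/

import Mathlib

open MeasureTheory Set intervalIntegral

private lemma beta_nat : ∀ (b a : ℕ) (s : ℝ),
    ∫ y in (0:ℝ)..s, y ^ a * (s - y) ^ b
      = (a.factorial * b.factorial / (a+b+1).factorial : ℝ) * s ^ (a+b+1) := by
  intro b
  induction b with
  | zero =>
    intro a s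
    simp only [pow_zero, mul_one, integral_pow, Nat.factorial, Nat.add_zero, mul_one]
    rw [zero_pow (by omega), sub_zero]
    push_cast [Nat.factorial_succ]
    field_simp
  | succ b IH =>
    intro a s
    have hIBP := integral_mul_deriv_eq_deriv_mul_of_hasDerivAt
      (u := fun y : ℝ => (s - y) ^ (b+1)) (v := fun y : ℝ => y ^ (a+1) / (a+1))
      (u' := fun y : ℝ => -((b+1) * (s - y) ^ b)) (v' := fun y : ℝ => y ^ a)
      (a := (0:ℝ)) (b := s)
      (by fun_prop) (by fun_prop)
      (fun x _ => by
        have h1 : HasDerivAt (fun y : ℝ => s - y) (-1) x := by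
          simpa using (hasDerivAt_id x).const_sub s
        simpa [mul_comm] using (h1.fun_pow (b+1))
        )
      (fun x _ => by
        have := (hasDerivAt_pow (a+1) x).div_const ((a:ℝ)+1)
        simpa [mul_comm, mul_div_assoc, mul_div_cancel_left₀, Nat.cast_add,
          (by positivity : ((a:ℝ)+1) ≠ 0)] using this)
      (by apply Continuous.intervalIntegrable; fun_prop)
      (by apply Continuous.intervalIntegrable; fun_prop)
    have comm : ∀ y : ℝ, (s - y)^(b+1) * y ^ a = y ^ a * (s - y)^(b+1) := fun y => mul_comm _ _
    simp_rw [← comm]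
    rw [hIBP]
    have : ∫ y in (0:ℝ)..s, -((b+1) * (s - y) ^ b) * (y ^ (a+1) / (a+1))
        = -(((b:ℝ)+1)/((a:ℝ)+1)) * ∫ y in (0:ℝ)..s, y ^ (a+1) * (s - y) ^ b := by
      rw [← intervalIntegral.integral_const_mul]
      congr 1; ext y; ring
    rw [this, IH (a+1) s]
    have hfac : ((a + 1 + b + 1).factorial : ℝ) = (a + (b+1) + 1).factorial := by
      norm_num; ring_nf
    simp only [sub_self, zero_pow (Nat.succ_ne_zero b), zero_mul, mul_zero, zero_sub, zero_div,
      sub_zero, zero_pow (Nat.succ_ne_zero a), neg_mul, neg_neg]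
    rw [hfac]
    have h1 : ((a:ℝ)+1) ≠ 0 := by positivity
    have h2 : ((a + (b+1) + 1).factorial : ℝ) ≠ 0 := by positivity
    push_cast [Nat.factorial_succ]
    field_simp
    ring


private lemma cube_meas {m : ℕ} : MeasurableSet (Set.Icc (0 : Fin m → ℝ) 1) :=
  measurableSet_Icc

private lemma integrand_meas (r m k : ℕ) (s : ℝ) :
    Measurable (fun y : Fin m → ℝ =>
      (if (∑ i, y i) ≤ s then (s - ∑ i, y i) ^ k else 0) * ∏ i, (r : ℝ) * (y i) ^ (r - 1)) := by
  apply Measurable.mul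
  · exact Measurable.ite (measurableSet_le (by fun_prop) measurable_const) (by fun_prop)
      measurable_const
  · fun_prop

private lemma integrand_bound (r m k : ℕ) (s : ℝ) (hs1 : s ≤ 1)
    {y : Fin m → ℝ} (hy : y ∈ Set.Icc (0 : Fin m → ℝ) 1) :
    ‖(if (∑ i, y i) ≤ s then (s - ∑ i, y i) ^ k else 0) * ∏ i, (r : ℝ) * (y i) ^ (r - 1)‖
      ≤ (r : ℝ) ^ m := by
  obtain ⟨hy0, hy1⟩ := hy
  have h0 : ∀ i, 0 ≤ y i := fun i => hy0 i
  have h1 : ∀ i, y i ≤ 1 := fun i => hy1 i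
  have hsum0 : 0 ≤ ∑ i, y i := Finset.sum_nonneg fun i _ => h0 i
  have hprod0 : 0 ≤ ∏ i, (r : ℝ) * (y i) ^ (r - 1) :=
    Finset.prod_nonneg fun i _ => mul_nonneg (Nat.cast_nonneg r) (pow_nonneg (h0 i) _)
  rw [norm_mul, Real.norm_eq_abs, Real.norm_eq_abs, abs_of_nonneg hprod0]
  have hA : |if (∑ i, y i) ≤ s then (s - ∑ i, y i) ^ k else 0| ≤ 1 := by
    split_ifs with h
    · rw [abs_of_nonneg (pow_nonneg (by linarith) _)]
      apply pow_le_one₀ (by linarith) (by linarith)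
    · simp
  have hB : ∏ i, (r : ℝ) * (y i) ^ (r - 1) ≤ (r : ℝ) ^ m := by
    calc ∏ i, (r : ℝ) * (y i) ^ (r - 1) ≤ ∏ i : Fin m, (r : ℝ) := by
          apply Finset.prod_le_prod
            (fun i _ => mul_nonneg (Nat.cast_nonneg r) (pow_nonneg (h0 i) _))
          intro i _
          have : (y i) ^ (r - 1) ≤ 1 := pow_le_one₀ (h0 i) (h1 i)
          nlinarith [Nat.cast_nonneg (α := ℝ) r]
      _ = (r : ℝ) ^ m := by simp
  calc |if (∑ i, y i) ≤ s then (s - ∑ i, y i) ^ k else 0| * (∏ i, (r : ℝ) * (y i) ^ (r - 1))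
      ≤ 1 * ((r:ℝ)^m) := mul_le_mul hA hB hprod0 zero_le_one
    _ = (r:ℝ)^m := one_mul _

private lemma integrand_intOn (r m k : ℕ) (s : ℝ) (hs1 : s ≤ 1) :
    IntegrableOn (fun y : Fin m → ℝ =>
      (if (∑ i, y i) ≤ s then (s - ∑ i, y i) ^ k else 0) * ∏ i, (r : ℝ) * (y i) ^ (r - 1))
      (Set.Icc 0 1) volume := by
  apply Measure.integrableOn_of_bounded (M := (r:ℝ)^m)
  · exact (isCompact_Icc.measure_lt_top).ne
  · exact (integrand_meas r m k s).aestronglyMeasurable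
  · rw [ae_restrict_iff' cube_meas]
    exact Filter.Eventually.of_forall fun y hy => integrand_bound r m k s hs1 hy

private lemma key (r : ℕ) (hr : 0 < r) : ∀ (m : ℕ) (k : ℕ) (s : ℝ), 0 ≤ s → s ≤ 1 →
    (∫ y in Set.Icc (0 : Fin m → ℝ) 1,
      (if (∑ i, y i) ≤ s then (s - ∑ i, y i) ^ k else 0) * ∏ i, (r : ℝ) * (y i) ^ (r - 1))
    = (k.factorial : ℝ) * (r.factorial : ℝ) ^ m * s ^ (k + m * r)
        / ((k + m * r).factorial : ℝ) := by
  intro m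
  induction m with
  | zero =>
    intro k s hs0 hs1
    have huniv : Set.Icc (0 : Fin 0 → ℝ) 1 = Set.univ := by
      ext x
      simp only [Set.mem_Icc, Set.mem_univ, iff_true]
      constructor <;> (intro i; exact i.elim0)
    rw [huniv]
    simp only [Finset.univ_eq_empty, Finset.sum_empty, Finset.prod_empty, mul_one, if_pos hs0,
      sub_zero]
    rw [MeasureTheory.setIntegral_univ, MeasureTheory.integral_const]
    rw [volume_pi, MeasureTheory.Measure.pi_of_empty]
    simp
    field_simp
  | succ m IH =>
    intro k s hs0 hs1
    have hC0 : ((k + m * r).factorial : ℝ) ≠ 0 := by positivity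
    set C : ℝ := (k.factorial : ℝ) * (r.factorial : ℝ) ^ m / ((k + m * r).factorial : ℝ) with hCdef
    set F : (Fin (m+1) → ℝ) → ℝ := fun y =>
      (if (∑ i, y i) ≤ s then (s - ∑ i, y i) ^ k else 0) * ∏ i, (r : ℝ) * (y i) ^ (r - 1)
      with hFdef
    set e : (Fin (m+1) → ℝ) ≃ᵐ (ℝ × (Fin m → ℝ)) :=
      MeasurableEquiv.piFinSuccAbove (fun _ : Fin (m+1) => ℝ) 0 with hedef
    have hmp : MeasurePreserving e volume volume :=
      MeasureTheory.volume_preserving_piFinSuccAbove (fun _ : Fin (m+1) => ℝ) 0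
    have hpre : e ⁻¹' ((Set.Icc (0:ℝ) 1) ×ˢ (Set.Icc (0 : Fin m → ℝ) 1))
        = Set.Icc (0 : Fin (m+1) → ℝ) 1 := by
      ext x
      simp only [Set.mem_preimage, Set.mem_prod, Set.mem_Icc, hedef,
        MeasurableEquiv.piFinSuccAbove_apply, Fin.zero_succAbove, Pi.le_def]
      constructor
      · rintro ⟨⟨h01, h02⟩, h1, h2⟩
        constructor <;> intro i <;>
          (induction i using Fin.cases with
           | zero => first | exact h01 | exact h02
           | succ j => first | exact h1 j | exact h2 j)
      · rintro ⟨h1, h2⟩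
        exact ⟨⟨h1 0, h2 0⟩, fun j => h1 _, fun j => h2 _⟩
    have hFs : ∀ (x : ℝ) (z : Fin m → ℝ), F (e.symm (x, z))
        = (r : ℝ) * x ^ (r-1) *
            ((if (∑ i, z i) ≤ s - x then ((s - x) - ∑ i, z i) ^ k else 0)
              * ∏ i, (r : ℝ) * (z i) ^ (r - 1)) := by
      intro x z
      have hsymm : e.symm (x, z) = Fin.cons x z := by
        simp [hedef, MeasurableEquiv.piFinSuccAbove_symm_apply, Fin.insertNthEquiv,
          Fin.insertNth_zero']
      rw [hsymm, hFdef]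
      simp only [Fin.sum_cons, Fin.prod_univ_succ, Fin.cons_zero, Fin.cons_succ]
      by_cases h : x + ∑ i, z i ≤ s
      · rw [if_pos h, if_pos (by linarith), show s - (x + ∑ i, z i) = (s - x) - ∑ i, z i by ring]
        ring
      · rw [if_neg h, if_neg (by intro hc; apply h; linarith)]
        ring
    -- transfer the integral to the product space
    have htrans : (∫ y in Set.Icc (0 : Fin (m+1) → ℝ) 1, F y)
        = ∫ p in ((Set.Icc (0:ℝ) 1) ×ˢ (Set.Icc (0 : Fin m → ℝ) 1)), F (e.symm p) := by
      rw [← hpre, ← hmp.setIntegral_preimage_emb e.measurableEmbedding (fun p => F (e.symm p))]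
      apply setIntegral_congr_fun (hpre ▸ cube_meas)
      intro x _
      simp
    have hIntProd : IntegrableOn (fun p => F (e.symm p))
        ((Set.Icc (0:ℝ) 1) ×ˢ (Set.Icc (0 : Fin m → ℝ) 1)) volume := by
      rw [← hmp.integrableOn_comp_preimage e.measurableEmbedding]
      have : ((fun p => F (e.symm p)) ∘ e) = F := by
        ext x; simp
      rw [this, hpre]
      exact integrand_intOn r (m+1) k s hs1
    rw [hFdef] at htrans
    rw [htrans]
    rw [MeasureTheory.Measure.volume_eq_prod] at hIntProd ⊢
    rw [MeasureTheory.setIntegral_prod _ hIntProd]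
    -- evaluate the inner integral
    set g : ℝ → ℝ := fun x =>
      if x ≤ s then (r:ℝ) * x ^ (r-1) * (C * (s - x) ^ (k + m*r)) else 0 with hgdef
    have hinner : ∀ x ∈ Set.Icc (0:ℝ) 1,
        (∫ z in Set.Icc (0 : Fin m → ℝ) 1, F (e.symm (x, z))) = g x := by
      intro x hx
      simp_rw [hFs x]
      rw [MeasureTheory.integral_const_mul]
      by_cases hxs : x ≤ s
      · rw [IH k (s - x) (by linarith) (by linarith [hx.1])]
        rw [hgdef]
        simp only [if_pos hxs, hCdef]
        ring
      · have hzero : ∀ z ∈ Set.Icc (0 : Fin m → ℝ) 1,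
            ((if (∑ i, z i) ≤ s - x then ((s - x) - ∑ i, z i) ^ k else 0)
              * ∏ i, (r : ℝ) * (z i) ^ (r - 1)) = (0:ℝ) := by
          intro z hz
          have h0 : 0 ≤ ∑ i, z i := Finset.sum_nonneg fun i _ => hz.1 i
          rw [if_neg (by push_neg at hxs ⊢; linarith), zero_mul]
        rw [setIntegral_congr_fun cube_meas hzero]
        simp [hgdef, if_neg hxs]
    rw [setIntegral_congr_fun measurableSet_Icc hinner]
    -- now a 1-dimensional computation
    have hgmeas : Measurable g := by
      exact Measurable.ite (measurableSet_le measurable_id measurable_const) (by fun_prop) measurable_const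
    have hcont : Continuous (fun x : ℝ => (r:ℝ) * x ^ (r-1) * (C * (s - x) ^ (k + m*r))) := by
      fun_prop
    have hii1 : IntervalIntegrable g volume 0 s := by
      rw [intervalIntegrable_iff_integrableOn_Ioc_of_le hs0]
      apply (hcont.integrableOn_Icc (a := 0) (b := s)).mono_set Set.Ioc_subset_Icc_self
        |>.congr_fun _ measurableSet_Ioc
      intro x hx
      simp [hgdef, if_pos hx.2]
    have hii2 : IntervalIntegrable g volume s 1 := by
      rw [intervalIntegrable_iff_integrableOn_Ioc_of_le hs1]
      apply (integrableOn_zero (s := Set.Ioc s 1)).congr_fun _ measurableSet_Ioc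
      intro x hx
      simp [hgdef, if_neg (not_le.mpr hx.1)]
    rw [integral_Icc_eq_integral_Ioc, ← intervalIntegral.integral_of_le zero_le_one,
      ← intervalIntegral.integral_add_adjacent_intervals hii1 hii2]
    have hpart2 : (∫ x in s..(1:ℝ), g x) = 0 := by
      rw [intervalIntegral.integral_of_le hs1]
      rw [setIntegral_congr_fun measurableSet_Ioc
        (fun x hx => by simp [hgdef, if_neg (not_le.mpr hx.1)] : Set.EqOn g 0 (Set.Ioc s 1))]
      simp
    have hpart1 : (∫ x in (0:ℝ)..s, g x)
        = (r:ℝ) * C * ∫ x in (0:ℝ)..s, x ^ (r-1) * (s - x) ^ (k + m*r) := by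
      rw [intervalIntegral.integral_of_le hs0, intervalIntegral.integral_of_le hs0]
      rw [setIntegral_congr_fun measurableSet_Ioc
        (fun x hx => by simp [hgdef, if_pos hx.2] : Set.EqOn g
          (fun x => (r:ℝ) * x ^ (r-1) * (C * (s - x) ^ (k + m*r))) (Set.Ioc 0 s))]
      rw [← MeasureTheory.integral_const_mul]
      congr 1
      ext x
      ring
    rw [hpart1, hpart2, beta_nat, add_zero]
    have hexp : (r - 1) + (k + m * r) + 1 = k + (m+1) * r := by rw [Nat.succ_mul]; omega
    rw [hexp]
    have hfac : ((r:ℝ)) * ((r-1).factorial : ℝ) = (r.factorial : ℝ) := by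
      rw [← Nat.cast_mul, Nat.mul_factorial_pred hr.ne']
    have hden : ((k + (m+1) * r).factorial : ℝ) ≠ 0 := by positivity
    rw [hCdef]
    field_simp
    rw [← hfac]
    ring

open MeasureTheory in
/-- `momentM r m k` is the `k`-th moment of the sum of `m` i.i.d. Beta(1,r) random
variables, written as an integral over the cube `[0,1]^m`. -/
noncomputable def momentM (r m k : ℕ) : ℝ :=
  ∫ x in Set.Icc (0 : Fin m → ℝ) 1,
    (∑ i, x i) ^ k * ∏ i, (r : ℝ) * (1 - x i) ^ (r - 1)

theorem stmt_10 (r m : ℕ) (hr : 0 < r) (hm : 0 < m) (k : ℕ) :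
    momentM r m k ≥
      (k.factorial : ℝ) * (r.factorial : ℝ) ^ m * (m : ℝ) ^ (k + m * r) /
          ((k + m * r).factorial : ℝ) *
        (1 -
          ((m : ℝ) - 1) ^ k / (m : ℝ) ^ (k + m * r) *
            ∑ i ∈ Finset.Icc 1 (m * r),
              ((k + m * r).choose (k + i) : ℝ) * ((m : ℝ) - 1) ^ i) := by
  have hm1 : (1:ℝ) ≤ (m:ℝ) := by exact_mod_cast hm
  set n := k + m * r with hn
  have hmpow : ((m:ℝ)) ^ n ≠ 0 := by positivity
  -- reflection y = 1 - x
  have hmp : MeasurePreserving (fun y : Fin m → ℝ => 1 - y) volume volume := by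
    have h : (fun y : Fin m → ℝ => 1 - y) = (fun z : Fin m → ℝ => 1 + z) ∘ (fun y => -y) := by
      ext y i; simp [sub_eq_add_neg]
    rw [h]
    exact (measurePreserving_add_left volume 1).comp (Measure.measurePreserving_neg volume)
  have hemb : MeasurableEmbedding (fun y : Fin m → ℝ => 1 - y) := by
    have h : (fun y : Fin m → ℝ => 1 - y) = ⇑((MeasurableEquiv.neg (Fin m → ℝ)).trans
        (MeasurableEquiv.addLeft 1)) := by
      ext y i; simp [sub_eq_add_neg]
    rw [h]
    exact MeasurableEquiv.measurableEmbedding _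
  have hpre : (fun y : Fin m → ℝ => 1 - y) ⁻¹' (Set.Icc 0 1) = Set.Icc (0 : Fin m → ℝ) 1 := by
    ext y
    simp only [Set.mem_preimage, Set.mem_Icc]
    constructor <;> rintro ⟨h1, h2⟩ <;> refine ⟨fun i => ?_, fun i => ?_⟩ <;>
      [have a1 := h2 i; have a2 := h1 i; have a1 := h2 i; have a2 := h1 i] <;>
      simp only [Pi.sub_apply, Pi.zero_apply, Pi.one_apply] at * <;> linarith
  have href : momentM r m k = ∫ y in Set.Icc (0 : Fin m → ℝ) 1,
      ((m:ℝ) - ∑ i, y i) ^ k * ∏ i, (r:ℝ) * (y i) ^ (r-1) := by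
    rw [momentM, ← hmp.setIntegral_preimage_emb hemb
      (fun x => (∑ i, x i) ^ k * ∏ i, (r : ℝ) * (1 - x i) ^ (r - 1)) (Set.Icc 0 1), hpre]
    apply setIntegral_congr_fun cube_meas
    intro y _
    simp only [Pi.sub_apply, Pi.one_apply]
    congr 1
    · congr 1
      rw [Finset.sum_sub_distrib, Finset.sum_const, Finset.card_univ, Fintype.card_fin]
      simp
    · exact Finset.prod_congr rfl fun i _ => by ring_nf
  -- the lower-bound function
  set L : (Fin m → ℝ) → ℝ := fun y =>
    ∑ j ∈ Finset.range (k+1), (((m:ℝ)-1) ^ (k-j) * (k.choose j : ℝ)) *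
      ((if (∑ i, y i) ≤ 1 then (1 - ∑ i, y i) ^ j else 0) * ∏ i, (r:ℝ) * (y i) ^ (r-1))
    with hLdef
  have hineq : ∀ y ∈ Set.Icc (0 : Fin m → ℝ) 1,
      L y ≤ ((m:ℝ) - ∑ i, y i) ^ k * ∏ i, (r:ℝ) * (y i) ^ (r-1) := by
    intro y hy
    have h0 : ∀ i, 0 ≤ y i := fun i => hy.1 i
    have h1 : ∀ i, y i ≤ 1 := fun i => hy.2 i
    have hprod0 : 0 ≤ ∏ i, (r : ℝ) * (y i) ^ (r - 1) :=
      Finset.prod_nonneg fun i _ => mul_nonneg (Nat.cast_nonneg r) (pow_nonneg (h0 i) _)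
    by_cases h : (∑ i, y i) ≤ 1
    · have hb : ((m:ℝ) - ∑ i, y i) ^ k
          = ∑ j ∈ Finset.range (k+1),
              (1 - ∑ i, y i) ^ j * ((m:ℝ)-1) ^ (k-j) * (k.choose j : ℝ) := by
        rw [show (m:ℝ) - ∑ i, y i = (1 - ∑ i, y i) + ((m:ℝ)-1) by ring, add_pow]
      rw [hLdef]
      apply le_of_eq
      rw [hb, Finset.sum_mul]
      apply Finset.sum_congr rfl
      intro j _
      rw [if_pos h]
      ring
    · have hL0 : L y = 0 := by
        rw [hLdef]
        apply Finset.sum_eq_zero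
        intro j _
        rw [if_neg h, zero_mul, mul_zero]
      rw [hL0]
      apply mul_nonneg _ hprod0
      apply pow_nonneg
      have : (∑ i, y i) ≤ (m:ℝ) := by
        calc (∑ i, y i) ≤ ∑ _i : Fin m, (1:ℝ) := Finset.sum_le_sum fun i _ => h1 i
          _ = (m:ℝ) := by simp
      linarith
  have hφint : IntegrableOn (fun y : Fin m → ℝ =>
      ((m:ℝ) - ∑ i, y i) ^ k * ∏ i, (r:ℝ) * (y i) ^ (r-1)) (Set.Icc 0 1) volume := by
    apply ContinuousOn.integrableOn_compact isCompact_Icc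
    apply Continuous.continuousOn
    apply Continuous.mul
    · exact (continuous_const.sub (continuous_finset_sum _ fun i _ => continuous_apply i)).pow k
    · exact continuous_finset_prod _ fun i _ =>
        continuous_const.mul ((continuous_apply i).pow _)
  have hLint : IntegrableOn L (Set.Icc 0 1) volume := by
    rw [hLdef]
    apply MeasureTheory.integrable_finset_sum
    intro j _
    exact (integrand_intOn r m j 1 le_rfl).const_mul _
  have hge : (∫ y in Set.Icc (0 : Fin m → ℝ) 1, L y)
      ≤ momentM r m k := by
    rw [href]
    exact setIntegral_mono_on hLint hφint cube_meas hineq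
  have hLeval : (∫ y in Set.Icc (0 : Fin m → ℝ) 1, L y)
      = ∑ j ∈ Finset.range (k+1), (((m:ℝ)-1) ^ (k-j) * (k.choose j : ℝ)) *
          ((j.factorial : ℝ) * (r.factorial : ℝ) ^ m / ((j + m*r).factorial : ℝ)) := by
    rw [hLdef, MeasureTheory.integral_finset_sum]
    · apply Finset.sum_congr rfl
      intro j _
      rw [MeasureTheory.integral_const_mul, key r hr m j 1 zero_le_one le_rfl, one_pow]
      ring
    · intro j _
      exact (integrand_intOn r m j 1 le_rfl).const_mul _
  -- it remains to identify the RHS with the sum above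
  have hbin : ((m:ℝ)) ^ n = ∑ l ∈ Finset.range (n+1), ((m:ℝ)-1) ^ l * (n.choose l : ℝ) := by
    have := add_pow ((m:ℝ)-1) 1 n
    simp only [one_pow, mul_one] at this
    rw [show ((m:ℝ)-1) + 1 = (m:ℝ) by ring] at this
    exact this
  have hsplit : ∑ l ∈ Finset.range (n+1), ((m:ℝ)-1) ^ l * (n.choose l : ℝ)
      = (∑ l ∈ Finset.range (k+1), ((m:ℝ)-1) ^ l * (n.choose l : ℝ))
        + ∑ l ∈ Finset.Icc (k+1) n, ((m:ℝ)-1) ^ l * (n.choose l : ℝ) := by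
    rw [Finset.range_eq_Ico, ← Finset.sum_Ico_consecutive _ (Nat.zero_le (k+1))
      (by omega : k+1 ≤ n+1), ← Finset.range_eq_Ico, Finset.Ico_add_one_right_eq_Icc]
  have hmap : ((m:ℝ)-1) ^ k * ∑ i ∈ Finset.Icc 1 (m*r), ((n.choose (k+i)) : ℝ) * ((m:ℝ)-1) ^ i
      = ∑ l ∈ Finset.Icc (k+1) n, ((m:ℝ)-1) ^ l * (n.choose l : ℝ) := by
    have hIcc : Finset.Icc (k+1) n = (Finset.Icc 1 (m*r)).map (addLeftEmbedding k) := by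
      rw [Finset.map_add_left_Icc, hn]
    rw [hIcc, Finset.sum_map, Finset.mul_sum]
    apply Finset.sum_congr rfl
    intro i _
    simp only [addLeftEmbedding_apply]
    rw [pow_add]
    ring
  have hfacn : ((n.factorial : ℝ)) ≠ 0 := by positivity
  have hRHS : (k.factorial : ℝ) * (r.factorial : ℝ) ^ m * (m : ℝ) ^ n /
          ((n).factorial : ℝ) *
        (1 - ((m : ℝ) - 1) ^ k / (m : ℝ) ^ n *
            ∑ i ∈ Finset.Icc 1 (m * r), ((n.choose (k + i)) : ℝ) * ((m : ℝ) - 1) ^ i)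
      = ∑ j ∈ Finset.range (k+1), (((m:ℝ)-1) ^ (k-j) * (k.choose j : ℝ)) *
          ((j.factorial : ℝ) * (r.factorial : ℝ) ^ m / ((j + m*r).factorial : ℝ)) := by
    have e1 : (1 : ℝ) - ((m : ℝ) - 1) ^ k / (m : ℝ) ^ n *
            ∑ i ∈ Finset.Icc 1 (m * r), ((n.choose (k + i)) : ℝ) * ((m : ℝ) - 1) ^ i
        = (∑ l ∈ Finset.range (k+1), ((m:ℝ)-1) ^ l * (n.choose l : ℝ)) / (m:ℝ) ^ n := by
      rw [div_mul_eq_mul_div, hmap, eq_div_iff hmpow, sub_mul, one_mul, div_mul_cancel₀ _ hmpow]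
      rw [hbin, hsplit]
      ring
    rw [e1]
    rw [show (k.factorial : ℝ) * (r.factorial:ℝ)^m * (m:ℝ)^n / (n.factorial:ℝ) *
        ((∑ l ∈ Finset.range (k+1), ((m:ℝ)-1)^l * (n.choose l : ℝ)) / (m:ℝ)^n)
        = (k.factorial : ℝ) * (r.factorial:ℝ)^m / (n.factorial:ℝ) *
          (∑ l ∈ Finset.range (k+1), ((m:ℝ)-1)^l * (n.choose l:ℝ)) from by
      field_simp]
    rw [Finset.mul_sum, ← Finset.sum_range_reflect (fun l =>
      (k.factorial : ℝ) * (r.factorial : ℝ) ^ m / (n.factorial : ℝ) *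
        (((m:ℝ)-1) ^ l * ((n.choose l : ℝ)))) (k+1)]
    apply Finset.sum_congr rfl
    intro j hj
    have hjk : j ≤ k := by
      rw [Finset.mem_range] at hj; omega
    simp only [Nat.add_sub_cancel]
    have hknj : k - j ≤ n := by omega
    have hnkj : n - (k - j) = j + m * r := by omega
    rw [Nat.cast_choose ℝ hknj, Nat.cast_choose ℝ hjk, hnkj]
    have h2 : ((j + m*r).factorial : ℝ) ≠ 0 := by positivity
    have h3 : ((k - j).factorial : ℝ) ≠ 0 := by positivity
    have h4 : ((j).factorial : ℝ) ≠ 0 := by positivity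
    field_simp
  rw [ge_iff_le, hn, hRHS, ← hLeval]
  exact hge
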